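/- For real ρ ∈ (0,1) and positive integer v, the Bessel function of the first kind J_v(vρ) is strictly increasing as a function of ρ, i.e., ∂J_v(vρ)/∂ρ > 0; consequently J_v(vρ) < J_v(v). -/

import Mathlib

open Real

/-- Bessel function of the first kind of integer order `v`, using Bessel's integral
representation `J_v(x) = (1/π) ∫₀^π cos (vϑ − x sin ϑ) dϑ`. -/
noncomputable def besselJ (v : ℤ) (x : ℝ) : ℝ :=
  (1 / π) * ∫ ϑ in (0 : ℝ)..π, Real.cos (v * ϑ - x * Real.sin ϑ)

open intervalIntegral MeasureTheory Set

/-- integrand of the k-th x-derivative of the Bessel integral -/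
noncomputable def bint (v : ℤ) (k : ℕ) (x ϑ : ℝ) : ℝ :=
  (Real.sin ϑ) ^ k * Real.cos (v * ϑ - x * Real.sin ϑ - k * (π / 2))

noncomputable def Fk (v : ℤ) (k : ℕ) (x : ℝ) : ℝ :=
  (1 / π) * ∫ ϑ in (0 : ℝ)..π, bint v k x ϑ

lemma bint_cont (v : ℤ) (k : ℕ) (x : ℝ) : Continuous (fun ϑ : ℝ => bint v k x ϑ) := by
  unfold bint; fun_prop

lemma bint_abs_le_one (v : ℤ) (k : ℕ) (x ϑ : ℝ) : ‖bint v k x ϑ‖ ≤ 1 := by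
  rw [Real.norm_eq_abs, bint, abs_mul]
  have h1 : |Real.sin ϑ ^ k| ≤ 1 := by
    rw [abs_pow]; exact pow_le_one₀ (abs_nonneg _) (abs_sin_le_one ϑ)
  calc |Real.sin ϑ ^ k| * |Real.cos (v * ϑ - x * Real.sin ϑ - k * (π / 2))|
      ≤ 1 * 1 := mul_le_mul h1 (abs_cos_le_one _) (abs_nonneg _) zero_le_one
    _ = 1 := one_mul 1

lemma bint_hasDerivAt (v : ℤ) (k : ℕ) (ϑ x : ℝ) :
    HasDerivAt (fun x : ℝ => bint v k x ϑ) (bint v (k+1) x ϑ) x := by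
  have h : HasDerivAt (fun x : ℝ => v * ϑ - x * Real.sin ϑ - k * (π / 2)) (-Real.sin ϑ) x := by
    simpa using (((hasDerivAt_id x).mul_const (Real.sin ϑ)).const_sub ((v:ℝ) * ϑ)).sub_const ((k:ℝ) * (π/2))
  have h2 := (h.cos).const_mul ((Real.sin ϑ) ^ k)
  unfold bint
  refine h2.congr_deriv ?_
  have heq : Real.sin (v * ϑ - x * Real.sin ϑ - k * (π / 2))
      = Real.cos (v * ϑ - x * Real.sin ϑ - (k+1 : ℕ) * (π / 2)) := by
    rw [show ((v:ℝ) * ϑ - x * Real.sin ϑ - (k+1 : ℕ) * (π / 2)) = (v * ϑ - x * Real.sin ϑ - k * (π / 2)) - π/2 by push_cast; ring,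
      Real.cos_sub_pi_div_two]
  rw [pow_succ, heq]; ring

set_option maxHeartbeats 1000000 in
lemma Fk_hasDerivAt (v : ℤ) (k : ℕ) (x₀ : ℝ) :
    HasDerivAt (Fk v k) (Fk v (k + 1) x₀) x₀ := by
  have key : IntervalIntegrable (fun ϑ => bint v (k+1) x₀ ϑ) volume 0 π ∧
      HasDerivAt (fun x : ℝ => ∫ ϑ in (0:ℝ)..π, bint v k x ϑ)
        (∫ ϑ in (0:ℝ)..π, bint v (k+1) x₀ ϑ) x₀ := by
    apply intervalIntegral.hasDerivAt_integral_of_dominated_loc_of_deriv_le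
      (F := fun x ϑ => bint v k x ϑ) (F' := fun x ϑ => bint v (k+1) x ϑ)
      (bound := fun _ => (1:ℝ)) Filter.univ_mem
    · exact Filter.Eventually.of_forall fun x => ((bint_cont v k x).aestronglyMeasurable)
    · exact (bint_cont v k x₀).intervalIntegrable _ _
    · exact (bint_cont v (k+1) x₀).aestronglyMeasurable
    · exact Filter.Eventually.of_forall fun ϑ _ x _ => bint_abs_le_one v (k+1) x ϑ
    · exact intervalIntegrable_const
    · exact Filter.Eventually.of_forall fun ϑ _ x _ => bint_hasDerivAt v k ϑ x
  unfold Fk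
  exact (key.2).const_mul (1/π)


noncomputable def Bc (k m : ℕ) : ℂ :=
  ∫ ϑ in (0:ℝ)..π, (Real.sin ϑ : ℂ) ^ k * Complex.exp ((m * Complex.I) * ϑ)

lemma Bc_cont (k m : ℕ) :
    Continuous (fun ϑ : ℝ => (Real.sin ϑ : ℂ) ^ k * Complex.exp ((m * Complex.I) * ϑ)) := by
  fun_prop

lemma Bc_zero_re (m : ℕ) (hm : 1 ≤ m) : (Bc 0 m).re = 0 := by
  have hc : (m : ℂ) * Complex.I ≠ 0 := by
    exact mul_ne_zero (Nat.cast_ne_zero.mpr (by omega)) Complex.I_ne_zero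
  have h : Bc 0 m = (Complex.exp ((m * Complex.I) * π) - Complex.exp ((m * Complex.I) * 0)) / (m * Complex.I) := by
    rw [Bc]
    simp only [pow_zero, one_mul]
    exact integral_exp_mul_complex hc
  have hexp : Complex.exp ((m * Complex.I) * π) = (-1 : ℂ) ^ m := by
    rw [show ((m : ℂ) * Complex.I) * π = m * (π * Complex.I) by ring,
      Complex.exp_nat_mul, Complex.exp_pi_mul_I]
  rw [h, hexp]
  rw [mul_comm ((m:ℂ)) Complex.I, mul_comm, div_eq_mul_inv, mul_inv, Complex.inv_I]
  simp [Complex.mul_re, Complex.mul_im]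
  left
  rw [show ((-1:ℂ)) = ((-1:ℝ):ℂ) by norm_num]
  rw [← Complex.ofReal_pow, Complex.ofReal_im]

lemma Bc_zero_zero : Bc 0 0 = (π : ℂ) := by
  rw [Bc]
  simp

lemma sin_mul_exp (m : ℕ) (ϑ : ℝ) :
    (Real.sin ϑ : ℂ) * Complex.exp ((((m+1 : ℕ)) * Complex.I) * ϑ)
      = (Complex.exp ((((m+2:ℕ)) * Complex.I) * ϑ) - Complex.exp ((m * Complex.I) * ϑ)) / (2 * Complex.I) := by
  have e1 : Complex.exp (↑ϑ * Complex.I) - Complex.exp (-↑ϑ * Complex.I)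
      = 2 * (Real.sin ϑ : ℂ) * Complex.I := by
    rw [Complex.exp_mul_I, Complex.exp_mul_I, Complex.cos_neg, Complex.sin_neg, Complex.ofReal_sin]
    ring
  have e2 : Complex.exp ((((m+2:ℕ)) * Complex.I) * ϑ)
      = Complex.exp ((((m+1:ℕ)) * Complex.I) * ϑ) * Complex.exp (↑ϑ * Complex.I) := by
    rw [← Complex.exp_add]; congr 1; push_cast; ring
  have e3 : Complex.exp ((m * Complex.I) * ϑ)
      = Complex.exp ((((m+1:ℕ)) * Complex.I) * ϑ) * Complex.exp (-↑ϑ * Complex.I) := by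
    rw [← Complex.exp_add]; congr 1; push_cast; ring
  rw [e2, e3, ← mul_sub, e1]
  field_simp

lemma Bc_rec (k m : ℕ) :
    Bc (k+1) (m+1) = (Bc k (m+2) - Bc k m) / (2 * Complex.I) := by
  have hpt : ∀ ϑ : ℝ, (Real.sin ϑ : ℂ) ^ (k+1) * Complex.exp ((((m+1:ℕ)) * Complex.I) * ϑ)
      = ((Real.sin ϑ : ℂ) ^ k * Complex.exp ((((m+2:ℕ)) * Complex.I) * ϑ)
        - (Real.sin ϑ : ℂ) ^ k * Complex.exp ((m * Complex.I) * ϑ)) / (2 * Complex.I) := by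
    intro ϑ
    rw [pow_succ, mul_assoc, sin_mul_exp, ← mul_sub]
    ring
  rw [Bc]
  simp_rw [hpt]
  rw [intervalIntegral.integral_div]
  rw [intervalIntegral.integral_sub ((Bc_cont k (m+2)).intervalIntegrable _ _) ((Bc_cont k m).intervalIntegrable _ _)]
  rfl

lemma Bc_re_eq (k : ℕ) : ∀ m : ℕ, k ≤ m →
    ((-Complex.I) ^ k * Bc k m).re = if k = m then π / 2 ^ k else 0 := by
  induction k with
  | zero =>
    intro m hm
    rcases Nat.eq_zero_or_pos m with h | h
    · subst h; simp [Bc_zero_zero]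
    · rw [if_neg (by omega)]
      simpa using Bc_zero_re m h
  | succ k ih =>
    intro m hm
    obtain ⟨m', rfl⟩ : ∃ m', m = m' + 1 := ⟨m - 1, by omega⟩
    have hk : k ≤ m' := by omega
    rw [Bc_rec]
    have key : (-Complex.I) ^ (k+1) * ((Bc k (m'+2) - Bc k m') / (2 * Complex.I))
        = (-(1/2) : ℝ) * ((-Complex.I) ^ k * Bc k (m'+2) - (-Complex.I) ^ k * Bc k m') := by
      have : (-Complex.I) * (2 * Complex.I)⁻¹ = (-(1/2) : ℝ) := by
        field_simp [Complex.I_ne_zero]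
        push_cast; ring
      field_simp
      rw [pow_succ]
      field_simp
      push_cast; ring
    rw [key, Complex.re_ofReal_mul, Complex.sub_re]
    rw [ih (m'+2) (by omega), ih m' hk]
    rw [if_neg (by omega)]
    by_cases h : k = m'
    · subst h
      rw [if_pos rfl, if_pos rfl]
      rw [pow_succ]
      ring
    · rw [if_neg h, if_neg (by omega)]
      ring

lemma neg_I_pow (k : ℕ) : (-Complex.I) ^ k = Complex.exp ((k : ℂ) * (-(π/2) * Complex.I)) := by
  rw [Complex.exp_nat_mul]
  congr 1
  rw [show (-(π/2) * Complex.I : ℂ) = ((-(π/2) : ℝ) : ℂ) * Complex.I by push_cast; ring]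
  rw [Complex.exp_mul_I, ← Complex.ofReal_cos, ← Complex.ofReal_sin]
  rw [Real.cos_neg, Real.sin_neg, Real.cos_pi_div_two, Real.sin_pi_div_two]
  push_cast
  ring

lemma re_term (n k : ℕ) (ϑ : ℝ) :
    ((-Complex.I) ^ k * ((Real.sin ϑ : ℂ) ^ k * Complex.exp ((n * Complex.I) * ϑ))).re
      = (Real.sin ϑ) ^ k * Real.cos (n * ϑ - k * (π/2)) := by
  have h1 : (-Complex.I) ^ k * ((Real.sin ϑ : ℂ) ^ k * Complex.exp ((n * Complex.I) * ϑ))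
      = ((Real.sin ϑ ^ k : ℝ) : ℂ) * Complex.exp (((n * ϑ - k * (π/2) : ℝ) : ℂ) * Complex.I) := by
    rw [neg_I_pow, mul_comm, mul_assoc, ← Complex.exp_add]
    push_cast
    congr 2
    ring
  rw [h1, Complex.re_ofReal_mul, Complex.exp_ofReal_mul_I_re]

lemma cast_toNat (v : ℤ) (hv : 1 ≤ v) : ((v.toNat : ℕ) : ℝ) = (v : ℝ) := by
  have := Int.toNat_of_nonneg (by omega : (0:ℤ) ≤ v)
  exact_mod_cast congrArg (fun z : ℤ => (z : ℝ)) this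

lemma Fk_zero (v : ℤ) (hv : 1 ≤ v) (k : ℕ) :
    Fk v k 0 = (1/π) * ((-Complex.I) ^ k * Bc k v.toNat).re := by
  set n := v.toNat with hn
  have h2 : ((-Complex.I) ^ k * Bc k n).re
      = ∫ ϑ in (0:ℝ)..π, ((-Complex.I) ^ k * ((Real.sin ϑ : ℂ) ^ k * Complex.exp ((n * Complex.I) * ϑ))).re := by
    rw [Bc, ← intervalIntegral.integral_const_mul]
    rw [← Complex.reCLM_apply,
      ← ContinuousLinearMap.intervalIntegral_comp_comm _ (Continuous.intervalIntegrable (by fun_prop) _ _)]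
    simp only [Complex.reCLM_apply]
  rw [h2]
  rw [Fk]
  congr 1
  apply intervalIntegral.integral_congr
  intro ϑ _
  beta_reduce
  rw [re_term, bint]
  rw [zero_mul, sub_zero, cast_toNat v hv]

lemma Fk_zero_of_lt (v : ℤ) (hv : 1 ≤ v) (k : ℕ) (hk : k < v.toNat) : Fk v k 0 = 0 := by
  rw [Fk_zero v hv k, Bc_re_eq k v.toNat (le_of_lt hk), if_neg (Nat.ne_of_lt hk), mul_zero]

lemma Fk_zero_top (v : ℤ) (hv : 1 ≤ v) : Fk v v.toNat 0 = 1 / 2 ^ v.toNat := by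
  rw [Fk_zero v hv _, Bc_re_eq _ _ le_rfl, if_pos rfl]
  field_simp

lemma Fk_cont (v : ℤ) (k : ℕ) : Continuous (Fk v k) :=
  continuous_iff_continuousAt.mpr fun x => (Fk_hasDerivAt v k x).continuousAt

lemma Fk_abs_le_one (v : ℤ) (k : ℕ) (x : ℝ) : |Fk v k x| ≤ 1 := by
  have h : ‖∫ ϑ in (0:ℝ)..π, bint v k x ϑ‖ ≤ 1 * |π - 0| :=
    intervalIntegral.norm_integral_le_of_norm_le_const fun ϑ _ => bint_abs_le_one v k x ϑ
  rw [sub_zero, abs_of_pos pi_pos, one_mul, Real.norm_eq_abs] at h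
  rw [Fk, abs_mul, abs_of_pos (by positivity : (0:ℝ) < 1/π)]
  calc 1/π * |∫ ϑ in (0:ℝ)..π, bint v k x ϑ| ≤ 1/π * π := by
        exact mul_le_mul_of_nonneg_left h (by positivity)
    _ = 1 := by field_simp

lemma Fk_ftc (v : ℤ) (k : ℕ) (a b : ℝ) :
    ∫ x in a..b, Fk v (k+1) x = Fk v k b - Fk v k a :=
  intervalIntegral.integral_eq_sub_of_hasDerivAt (fun x _ => Fk_hasDerivAt v k x)
    ((Fk_cont v (k+1)).intervalIntegrable _ _)

lemma Fk_bound (v : ℤ) (hv : 1 ≤ v) : ∀ j : ℕ, j ≤ v.toNat → ∀ x : ℝ, 0 ≤ x →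
    |Fk v (v.toNat - j) x - (1 / 2 ^ v.toNat) * x ^ j / (j.factorial : ℝ)|
      ≤ x ^ (j+1) / ((j+1).factorial : ℝ) := by
  set n := v.toNat with hn
  intro j
  induction j with
  | zero =>
    intro _ x hx
    have h2 : ‖∫ t in (0:ℝ)..x, Fk v (n+1) t‖ ≤ 1 * |x - 0| :=
      intervalIntegral.norm_integral_le_of_norm_le_const fun t _ => by
        rw [Real.norm_eq_abs]; exact Fk_abs_le_one v (n+1) t
    rw [Fk_ftc v n 0 x, Fk_zero_top v hv, sub_zero, abs_of_nonneg hx, one_mul,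
      Real.norm_eq_abs] at h2
    simpa [Nat.factorial] using h2
  | succ j ih =>
    intro hj x hx
    have hjn : j ≤ n := by omega
    have hsucc : n - (j+1) + 1 = n - j := by omega
    have h0 : Fk v (n - (j+1)) 0 = 0 := Fk_zero_of_lt v hv _ (by omega)
    have h1 : Fk v (n - (j+1)) x = ∫ t in (0:ℝ)..x, Fk v (n - j) t := by
      have := Fk_ftc v (n - (j+1)) 0 x
      rw [hsucc] at this
      rw [this, h0, sub_zero]
    have hpow : ∫ t in (0:ℝ)..x, (1 / 2 ^ n) * t ^ j / (j.factorial : ℝ)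
        = (1 / 2 ^ n) * x ^ (j+1) / ((j+1).factorial : ℝ) := by
      have he : ∀ t : ℝ, (1 / 2 ^ n) * t ^ j / (j.factorial : ℝ)
          = ((1:ℝ) / 2 ^ n / (j.factorial : ℝ)) * t ^ j := by intro t; ring
      simp_rw [he]
      rw [intervalIntegral.integral_const_mul, integral_pow, zero_pow (Nat.succ_ne_zero j)]
      rw [Nat.factorial_succ]
      push_cast
      have hjf : (j.factorial : ℝ) ≠ 0 := by exact_mod_cast Nat.factorial_ne_zero j
      field_simp
      all_goals first | ring1 | (left; ring1) | (left; left; ring1)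
    have h2 : Fk v (n - (j+1)) x - (1 / 2 ^ n) * x ^ (j+1) / ((j+1).factorial : ℝ)
        = ∫ t in (0:ℝ)..x, (Fk v (n - j) t - (1 / 2 ^ n) * t ^ j / (j.factorial : ℝ)) := by
      rw [intervalIntegral.integral_sub ((Fk_cont v (n-j)).intervalIntegrable _ _)
        (by apply Continuous.intervalIntegrable; fun_prop)]
      rw [← h1, hpow]
    have h4 : ∫ t in (0:ℝ)..x, t ^ (j+1) / ((j+1).factorial : ℝ)
        = x ^ (j+2) / ((j+2).factorial : ℝ) := by
      simp_rw [div_eq_mul_inv]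
      rw [intervalIntegral.integral_mul_const, integral_pow,
        zero_pow (Nat.succ_ne_zero (j+1))]
      rw [show ((j+2 : ℕ)).factorial = (j+2) * (j+1).factorial from Nat.factorial_succ (j+1)]
      push_cast
      have hjf : ((j+1).factorial : ℝ) ≠ 0 := by exact_mod_cast Nat.factorial_ne_zero (j+1)
      field_simp
      all_goals first | ring1 | (left; ring1) | (left; left; ring1)
    have h3 : ‖∫ t in (0:ℝ)..x, (Fk v (n - j) t - (1 / 2 ^ n) * t ^ j / (j.factorial : ℝ))‖
        ≤ |∫ t in (0:ℝ)..x, t ^ (j+1) / ((j+1).factorial : ℝ)| := by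
      apply intervalIntegral.norm_integral_le_abs_of_norm_le
      · rw [ae_restrict_iff' measurableSet_uIoc]
        refine Filter.Eventually.of_forall fun t ht => ?_
        have ht0 : 0 ≤ t := by
          rcases Set.mem_uIoc.mp ht with h | h
          · exact le_of_lt h.1
          · rcases h with ⟨hh1, hh2⟩; linarith
        rw [Real.norm_eq_abs]
        exact ih hjn t ht0
      · apply Continuous.intervalIntegrable; fun_prop
    rw [h2]
    calc |∫ t in (0:ℝ)..x, (Fk v (n - j) t - (1 / 2 ^ n) * t ^ j / (j.factorial : ℝ))|
        ≤ |x ^ (j+2) / ((j+2).factorial : ℝ)| := by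
          rw [← h4]; rw [Real.norm_eq_abs] at h3; exact h3
      _ = x ^ (j+2) / ((j+2).factorial : ℝ) :=
          abs_of_nonneg (div_nonneg (pow_nonneg hx _) (by positivity))

lemma Fk_ode (v : ℤ) (x : ℝ) :
    x^2 * Fk v 2 x + x * Fk v 1 x + (x^2 - (v:ℝ)^2) * Fk v 0 x = 0 := by
  set G : ℝ → ℝ := fun ϑ => (x * Real.cos ϑ + v) * Real.sin (v*ϑ - x*Real.sin ϑ) with hGdef
  have hG : ∀ ϑ : ℝ, HasDerivAt G
      (-(x^2 * bint v 2 x ϑ + x * bint v 1 x ϑ + (x^2 - (v:ℝ)^2) * bint v 0 x ϑ)) ϑ := by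
    intro ϑ
    have h1 : HasDerivAt (fun ϑ : ℝ => x * Real.cos ϑ + (v:ℝ)) (x * (-Real.sin ϑ)) ϑ :=
      ((Real.hasDerivAt_cos ϑ).const_mul x).add_const _
    have h2 : HasDerivAt (fun ϑ : ℝ => (v:ℝ)*ϑ - x*Real.sin ϑ) ((v:ℝ) - x * Real.cos ϑ) ϑ := by
      simpa [Pi.sub_def] using ((hasDerivAt_id ϑ).const_mul (v:ℝ)).sub ((Real.hasDerivAt_sin ϑ).const_mul x)
    have h3 := h2.sin
    have h4 := h1.mul h3
    refine h4.congr_deriv ?_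
    simp only [bint]
    have e0 : ((0:ℕ):ℝ) * (π/2) = 0 := by norm_num
    have e1 : ((1:ℕ):ℝ) * (π/2) = π/2 := by norm_num
    have e2 : ((2:ℕ):ℝ) * (π/2) = π := by push_cast; ring
    rw [e0, e1, e2, sub_zero, Real.cos_sub_pi, Real.cos_sub_pi_div_two]
    have hsq : Real.sin ϑ ^ 2 = 1 - Real.cos ϑ ^ 2 := Real.sin_sq ϑ
    rw [hsq]
    ring
  have hcontb : ∀ k : ℕ, Continuous (fun ϑ : ℝ => bint v k x ϑ) := fun k => bint_cont v k x
  have hint : (∫ ϑ in (0:ℝ)..π,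
      (-(x^2 * bint v 2 x ϑ + x * bint v 1 x ϑ + (x^2 - (v:ℝ)^2) * bint v 0 x ϑ))) = G π - G 0 := by
    apply intervalIntegral.integral_eq_sub_of_hasDerivAt (fun ϑ _ => hG ϑ)
    apply Continuous.intervalIntegrable
    fun_prop
  have hGpi : G π = 0 := by
    have : Real.sin ((v:ℝ)*π - x*Real.sin π) = 0 := by
      rw [Real.sin_pi, mul_zero, sub_zero, Real.sin_int_mul_pi]
    simp [hGdef, this]
  have hG0 : G 0 = 0 := by simp [hGdef]
  have hsplit : (∫ ϑ in (0:ℝ)..π,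
      (-(x^2 * bint v 2 x ϑ + x * bint v 1 x ϑ + (x^2 - (v:ℝ)^2) * bint v 0 x ϑ)))
      = -(x^2 * (π * Fk v 2 x) + x * (π * Fk v 1 x) + (x^2 - (v:ℝ)^2) * (π * Fk v 0 x)) := by
    rw [intervalIntegral.integral_neg]
    congr 1
    rw [intervalIntegral.integral_add (by apply Continuous.intervalIntegrable; fun_prop)
      (by apply Continuous.intervalIntegrable; fun_prop),
      intervalIntegral.integral_add (by apply Continuous.intervalIntegrable; fun_prop)
      (by apply Continuous.intervalIntegrable; fun_prop)]
    rw [intervalIntegral.integral_const_mul, intervalIntegral.integral_const_mul,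
      intervalIntegral.integral_const_mul]
    have hFk : ∀ k : ℕ, (∫ ϑ in (0:ℝ)..π, bint v k x ϑ) = π * Fk v k x := by
      intro k
      rw [Fk]
      field_simp
    rw [hFk 0, hFk 1, hFk 2]
  rw [hsplit, hGpi, hG0, sub_zero, neg_eq_zero] at hint
  have hpi : (π:ℝ) ≠ 0 := Real.pi_ne_zero
  have : π * (x^2 * Fk v 2 x + x * Fk v 1 x + (x^2 - (v:ℝ)^2) * Fk v 0 x) = 0 := by
    rw [← hint]; ring
  rcases mul_eq_zero.mp this with h | h
  · exact absurd h hpi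
  · exact h

lemma Fk_seed1 (v : ℤ) (hv : 1 ≤ v) (x : ℝ) (hx : 0 < x)
    (hxc : x < (v.toNat : ℝ) / 2 ^ v.toNat) : 0 < Fk v 1 x := by
  set n := v.toNat with hn
  have hn1 : 1 ≤ n := by omega
  obtain ⟨m, hm⟩ : ∃ m, n = m + 1 := ⟨n - 1, by omega⟩
  have bound := Fk_bound v hv m (by omega) x hx.le
  rw [show n - m = 1 by omega] at bound
  have habs := abs_le.mp bound
  have hfm : (0:ℝ) < (m.factorial : ℝ) := by exact_mod_cast Nat.factorial_pos m
  have hfm1 : ((m+1).factorial : ℝ) = (m+1) * (m.factorial : ℝ) := by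
    exact_mod_cast Nat.factorial_succ m
  have hxm : 0 < x ^ m := pow_pos hx m
  have h2n : (0:ℝ) < 2 ^ n := by positivity
  have hxn : x * 2 ^ n < (m:ℝ) + 1 := by
    have h := hxc
    rw [hn] at h
    rw [show v.toNat = m + 1 by omega] at h
    push_cast at h
    have h2m : (0:ℝ) < 2 ^ (m+1) := by positivity
    have := (lt_div_iff₀ h2m).mp h
    rw [hn, show v.toNat = m + 1 by omega]
    push_cast
    exact this
  have key : x ^ (m+1) / ((m+1).factorial : ℝ) < (1 / 2 ^ n) * x ^ m / (m.factorial : ℝ) := by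
    rw [hfm1, pow_succ, div_lt_div_iff₀ (by positivity) (by positivity)]
    have hrw : (1/2^n : ℝ) * x^m * (((m:ℝ)+1) * (m.factorial : ℝ))
        = x^m * (((m:ℝ)+1) * (m.factorial : ℝ)) / 2^n := by ring
    rw [hrw, lt_div_iff₀ h2n]
    nlinarith [mul_lt_mul_of_pos_left hxn (mul_pos hxm hfm)]
  linarith [habs.1]

lemma Fk_seed0 (v : ℤ) (hv : 1 ≤ v) (x : ℝ) (hx : 0 < x)
    (hxc : x ≤ (v.toNat : ℝ) / 2 ^ v.toNat) : 0 < Fk v 0 x := by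
  set n := v.toNat with hn
  have hn1 : 1 ≤ n := by omega
  have bound := Fk_bound v hv n le_rfl x hx.le
  rw [show n - n = 0 by omega] at bound
  have habs := abs_le.mp bound
  have hfn : (0:ℝ) < (n.factorial : ℝ) := by exact_mod_cast Nat.factorial_pos n
  have hfn1 : ((n+1).factorial : ℝ) = (n+1) * (n.factorial : ℝ) := by
    exact_mod_cast Nat.factorial_succ n
  have hxn : 0 < x ^ n := pow_pos hx n
  have h2n : (0:ℝ) < 2 ^ n := by positivity
  have hxlt : x * 2 ^ n < (n:ℝ) + 1 := by
    have h1 : x * 2 ^ n ≤ (n : ℝ) := (le_div_iff₀ h2n).mp hxc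
    linarith
  have key : x ^ (n+1) / ((n+1).factorial : ℝ) < (1 / 2 ^ n) * x ^ n / (n.factorial : ℝ) := by
    rw [hfn1, pow_succ, div_lt_div_iff₀ (by positivity) (by positivity)]
    have hrw : (1/2^n : ℝ) * x^n * (((n:ℝ)+1) * (n.factorial : ℝ))
        = x^n * (((n:ℝ)+1) * (n.factorial : ℝ)) / 2^n := by ring
    rw [hrw, lt_div_iff₀ h2n]
    nlinarith [mul_lt_mul_of_pos_left hxlt (mul_pos hxn hfn)]
  linarith [habs.1]

lemma Fk_one_pos (v : ℤ) (hv : 1 ≤ v) : ∀ x : ℝ, 0 < x → x < (v:ℝ) → 0 < Fk v 1 x := by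
  set n := v.toNat with hn
  have hvn : ((n : ℕ) : ℝ) = (v : ℝ) := cast_toNat v hv
  set c : ℝ := (n : ℝ) / 2 ^ n with hc
  have hcpos : 0 < c := by
    have : (0:ℝ) < n := by exact_mod_cast (by omega : 0 < n)
    positivity
  by_contra hcon
  push_neg at hcon
  obtain ⟨y, hy0, hyv, hy1⟩ := hcon
  -- the set of bad points
  set T : Set ℝ := Set.Icc (c/2) (v:ℝ) ∩ (Fk v 1)⁻¹' (Set.Iic 0) with hT
  have hyc : c ≤ y := by
    by_contra hyc
    push_neg at hyc
    exact absurd hy1 (not_le.mpr (Fk_seed1 v hv y hy0 hyc))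
  have hyT : y ∈ T := ⟨⟨by linarith, hyv.le⟩, hy1⟩
  have hTclosed : IsClosed T :=
    isClosed_Icc.inter (isClosed_Iic.preimage (Fk_cont v 1))
  have hTbdd : BddBelow T := ⟨c/2, fun z hz => hz.1.1⟩
  set x₀ : ℝ := sInf T with hx0
  have hx0T : x₀ ∈ T := hTclosed.csInf_mem ⟨y, hyT⟩ hTbdd
  have hx0le : Fk v 1 x₀ ≤ 0 := hx0T.2
  have hx0pos : 0 < x₀ := lt_of_lt_of_le (by linarith) hx0T.1.1
  have hx0c : c ≤ x₀ := by
    by_contra hcn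
    push_neg at hcn
    exact absurd hx0le (not_le.mpr (Fk_seed1 v hv x₀ hx0pos hcn))
  have hx0y : x₀ ≤ y := csInf_le hTbdd hyT
  have hx0v : x₀ < (v:ℝ) := lt_of_le_of_lt hx0y hyv
  have hpos : ∀ x : ℝ, 0 < x → x < x₀ → 0 < Fk v 1 x := by
    intro x hxp hxlt
    rcases lt_or_ge x c with h | h
    · exact Fk_seed1 v hv x hxp h
    · by_contra hne
      push_neg at hne
      have hxT : x ∈ T := ⟨⟨by linarith, by linarith⟩, hne⟩
      exact absurd (csInf_le hTbdd hxT) (not_le.mpr hxlt)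
  have hx0eq : Fk v 1 x₀ = 0 := by
    refine le_antisymm hx0le ?_
    have hev : ∀ᶠ x in nhdsWithin x₀ (Set.Iio x₀), 0 ≤ Fk v 1 x := by
      filter_upwards [Ioo_mem_nhdsLT_of_mem (⟨hx0pos, le_rfl⟩ : x₀ ∈ Set.Ioc 0 x₀)] with x hx
      exact (hpos x hx.1 hx.2).le
    exact ge_of_tendsto ((Fk_cont v 1).continuousAt.tendsto.mono_left nhdsWithin_le_nhds) hev
  -- F0 at x₀ is positive
  have hF0 : 0 < Fk v 0 x₀ := by
    have hseed : 0 < Fk v 0 (c/2) := Fk_seed0 v hv (c/2) (by linarith) (by linarith)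
    have hint : Fk v 0 x₀ - Fk v 0 (c/2) = ∫ t in (c/2)..x₀, Fk v 1 t := (Fk_ftc v 0 (c/2) x₀).symm
    have hnonneg : 0 ≤ ∫ t in (c/2)..x₀, Fk v 1 t := by
      apply intervalIntegral.integral_nonneg (by linarith)
      intro u hu
      rcases lt_or_eq_of_le hu.2 with h | h
      · exact (hpos u (by linarith [hu.1]) h).le
      · rw [h, hx0eq]
    linarith
  -- F2 at x₀ is positive, from the ODE
  have hF2 : 0 < Fk v 2 x₀ := by
    have hode := Fk_ode v x₀
    rw [hx0eq, mul_zero, add_zero] at hode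
    have hvsq : x₀^2 < (v:ℝ)^2 := by nlinarith
    have hx0sq : 0 < x₀^2 := by positivity
    nlinarith
  -- contradiction via the slope of F1 at x₀
  have hslope := hasDerivAt_iff_tendsto_slope.mp (Fk_hasDerivAt v 1 x₀)
  have hev1 : ∀ᶠ z in nhdsWithin x₀ {x₀}ᶜ, 0 < slope (Fk v 1) x₀ z :=
    hslope.eventually (eventually_gt_nhds hF2)
  have hev2 : ∀ᶠ z in nhdsWithin x₀ (Set.Iio x₀), 0 < slope (Fk v 1) x₀ z :=
    hev1.filter_mono (nhdsWithin_mono x₀ (fun z hz => ne_of_lt hz))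
  have hev3 : ∀ᶠ z in nhdsWithin x₀ (Set.Iio x₀), z ∈ Set.Ioo (0:ℝ) x₀ :=
    Ioo_mem_nhdsLT_of_mem (⟨hx0pos, le_rfl⟩ : x₀ ∈ Set.Ioc 0 x₀)
  obtain ⟨z, hz1, hz2⟩ := (hev2.and hev3).exists
  rw [slope_def_field, hx0eq, sub_zero] at hz1
  have hzneg : Fk v 1 z < 0 := by
    have hzx : z - x₀ < 0 := by linarith [hz2.2]
    by_contra hzn
    push_neg at hzn
    have : Fk v 1 z / (z - x₀) ≤ 0 := div_nonpos_of_nonneg_of_nonpos hzn hzx.le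
    linarith
  exact absurd (hpos z hz2.1 hz2.2) (not_lt.mpr hzneg.le)


lemma besselJ_eq_Fk (v : ℤ) (x : ℝ) : besselJ v x = Fk v 0 x := by
  simp [besselJ, Fk, bint]

lemma besselJ_mono_aux (v : ℤ) (hv : 1 ≤ v) {a b : ℝ} (ha : 0 ≤ a) (hab : a < b)
    (hb : b ≤ (v:ℝ)) : Fk v 0 a < Fk v 0 b := by
  have h := Fk_ftc v 0 a b
  have hpos : 0 < ∫ x in a..b, Fk v 1 x :=
    intervalIntegral.intervalIntegral_pos_of_pos_on ((Fk_cont v 1).intervalIntegrable a b)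
      (fun x hx => Fk_one_pos v hv x (lt_of_le_of_lt ha hx.1) (lt_of_lt_of_le hx.2 hb)) hab
  rw [h] at hpos
  linarith

theorem besselJ_strictMono_in_rho (v : ℤ) (hv : 1 ≤ v) :
    StrictMonoOn (fun ρ : ℝ => besselJ v (v * ρ)) (Set.Ioo 0 1) ∧
      ∀ ρ ∈ Set.Ioo (0 : ℝ) 1, besselJ v (v * ρ) < besselJ v v := by
  have hv1 : (1:ℝ) ≤ (v:ℝ) := by exact_mod_cast hv
  have hv0 : (0:ℝ) < (v:ℝ) := by linarith
  constructor
  · intro ρ1 h1 ρ2 h2 hlt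
    simp only
    rw [besselJ_eq_Fk, besselJ_eq_Fk]
    apply besselJ_mono_aux v hv
    · exact mul_nonneg hv0.le h1.1.le
    · exact mul_lt_mul_of_pos_left hlt hv0
    · calc (v:ℝ) * ρ2 ≤ (v:ℝ) * 1 := mul_le_mul_of_nonneg_left h2.2.le hv0.le
        _ = (v:ℝ) := mul_one _
  · intro ρ hρ
    rw [besselJ_eq_Fk, besselJ_eq_Fk]
    apply besselJ_mono_aux v hv
    · exact mul_nonneg hv0.le hρ.1.le
    · calc (v:ℝ) * ρ < (v:ℝ) * 1 := mul_lt_mul_of_pos_left hρ.2 hv0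
        _ = (v:ℝ) := mul_one _
    · exact le_refl _
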